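/- arXiv:1503.04964 — 2 statements merged into one kernel-verified Lean document; each statement's English description precedes it below -/
import Mathlib

section
/- The Bellman operator for the energy-sharing MDP preserves monotonicity in the data buffer: if H : S → ℝ satisfies H(q,E) ≤ H(q^L,E) for all q ≤ q^L ≤ D_MAX and all E, then L H also satisfies (L H)(q,E) ≤ (L H)(q^L,E) for all q ≤ q^L, where (L H)(q,E) = min_{T ∈ A(E)} ( (q - g(T))⁺ + ∑_{x,y} P(x)Q(y)·H( min((q-g(T))⁺ + x, D_MAX), min(E - T + y, E_MAX) ) ) - (L H)(q_r,E_r). -/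
open Finset

theorem stmt11 (DMAX EMAX : ℕ)
    (f : ℕ → ℕ → ℕ)  -- f q T = (q - g(T))⁺ truncated to {0,...,DMAX}
    (hf : ∀ T, Monotone fun q => f q T) (hfD : ∀ q T, f q T ≤ DMAX)
    (Xs Ys : Finset ℕ) (hXs : Xs.Nonempty) (hYs : Ys.Nonempty)
    (P Q : ℕ → ℝ) (hP0 : ∀ x, 0 ≤ P x) (hQ0 : ∀ y, 0 ≤ Q y)
    (hP1 : ∑ x ∈ Xs, P x = 1) (hQ1 : ∑ y ∈ Ys, Q y = 1)
    (qr Er : ℕ)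
    (H : ℕ × ℕ → ℝ)
    (hH : ∀ E, Monotone fun q => H (q, E))
    (LH : ℕ → ℕ → ℝ)
    (hLH : ∀ q E, LH q E =
      ((range (E + 1)).inf' (by simp) fun T =>
        (f q T : ℝ) + ∑ x ∈ Xs, ∑ y ∈ Ys, P x * Q y *
          H (min (f q T + x) DMAX, min (E - T + y) EMAX)) -
      ((range (Er + 1)).inf' (by simp) fun T =>
        (f qr T : ℝ) + ∑ x ∈ Xs, ∑ y ∈ Ys, P x * Q y *
          H (min (f qr T + x) DMAX, min (Er - T + y) EMAX))) :
    ∀ q qL E : ℕ, q ≤ qL → LH q E ≤ LH qL E := by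
  intro q qL E hq
  rw [hLH, hLH]
  apply sub_le_sub_right
  refine Finset.le_inf' _ _ fun T hT => ?_
  refine le_trans (Finset.inf'_le _ hT) ?_
  have hfq : f q T ≤ f qL T := hf T hq
  refine add_le_add (by exact_mod_cast hfq) ?_
  refine Finset.sum_le_sum fun x _ => Finset.sum_le_sum fun y _ => ?_
  refine mul_le_mul_of_nonneg_left ?_ (mul_nonneg (hP0 x) (hQ0 y))
  exact hH _ (min_le_min (add_le_add_left hfq x) le_rfl)
end

section
/- The Bellman operator preserves monotonicity (nonincreasing) in the energy buffer: if H : S → ℝ satisfies H(q,E) ≥ H(q,E^L) whenever E ≤ E^L, then L H satisfies (L H)(q,E) ≥ (L H)(q,E^L) whenever E ≤ E^L, using that A(E) ⊆ A(E^L) and that the next energy state E - T + y is monotone in E for fixed T. -/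
open Finset

theorem stmt12 (DMAX EMAX : ℕ)
    (f : ℕ → ℕ → ℕ)  -- f q T = (q - g(T))⁺ truncated to {0,...,DMAX}
    (hf : ∀ T, Monotone fun q => f q T) (hfD : ∀ q T, f q T ≤ DMAX)
    (Xs Ys : Finset ℕ) (hXs : Xs.Nonempty) (hYs : Ys.Nonempty)
    (P Q : ℕ → ℝ) (hP0 : ∀ x, 0 ≤ P x) (hQ0 : ∀ y, 0 ≤ Q y)
    (hP1 : ∑ x ∈ Xs, P x = 1) (hQ1 : ∑ y ∈ Ys, Q y = 1)
    (qr Er : ℕ)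
    (H : ℕ × ℕ → ℝ)
    (hH : ∀ q, Antitone fun E => H (q, E))
    (LH : ℕ → ℕ → ℝ)
    (hLH : ∀ q E, LH q E =
      ((range (E + 1)).inf' (by simp) fun T =>
        (f q T : ℝ) + ∑ x ∈ Xs, ∑ y ∈ Ys, P x * Q y *
          H (min (f q T + x) DMAX, min (E - T + y) EMAX)) -
      ((range (Er + 1)).inf' (by simp) fun T =>
        (f qr T : ℝ) + ∑ x ∈ Xs, ∑ y ∈ Ys, P x * Q y *
          H (min (f qr T + x) DMAX, min (Er - T + y) EMAX))) :
    ∀ q E EL : ℕ, E ≤ EL → LH q EL ≤ LH q E := by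
  intro q E EL hE
  rw [hLH, hLH]
  apply sub_le_sub_right
  apply Finset.le_inf'
  intro T hT
  have hT' : T ∈ range (EL + 1) := by
    simp only [mem_range] at *; omega
  refine le_trans (Finset.inf'_le _ hT') ?_
  apply add_le_add_right
  apply Finset.sum_le_sum
  intro x hx
  apply Finset.sum_le_sum
  intro y hy
  apply mul_le_mul_of_nonneg_left _ (mul_nonneg (hP0 x) (hQ0 y))
  exact hH _ (min_le_min (by omega) le_rfl)
end
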